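/- Fix l ∈ ℕ₀ and let ψ_{0,l}(ρ) := ρ^{l+1} (1−ρ²)^{−1/2} (2/(1+√(1−ρ²)))^{3/2+l} and ψ_{1,l}(ρ) := ρ^{l+1} (1/((3+2l)√(1−ρ²))) [ (1/(1−√(1−ρ²)))^{3/2+l} − (1/(1+√(1−ρ²)))^{3/2+l} ] for ρ ∈ (0,1). Then their Wronskian satisfies W(ψ_{0,l}, ψ_{1,l})(ρ) := ψ_{0,l}(ρ) ψ_{1,l}'(ρ) − ψ_{0,l}'(ρ) ψ_{1,l}(ρ) = −2^{l+3/2} / (ρ² (1−ρ²)^{3/2}) for all ρ ∈ (0,1). -/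

import Mathlib

noncomputable section

/-- `ψ_{0,l}(ρ) = ρ^{l+1} (1−ρ²)^{−1/2} (2/(1+√(1−ρ²)))^{3/2+l}` -/
def psi0 (l : ℕ) (ρ : ℝ) : ℝ :=
  ρ ^ (l + 1) * (1 - ρ ^ 2) ^ (-(1 / 2) : ℝ) *
    (2 / (1 + Real.sqrt (1 - ρ ^ 2))) ^ ((3 : ℝ) / 2 + l)

/-- `ψ_{1,l}(ρ) = ρ^{l+1} (1/((3+2l)√(1−ρ²))) [(1/(1−√(1−ρ²)))^{3/2+l} − (1/(1+√(1−ρ²)))^{3/2+l}]` -/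
def psi1 (l : ℕ) (ρ : ℝ) : ℝ :=
  ρ ^ (l + 1) * (1 / ((3 + 2 * (l : ℝ)) * Real.sqrt (1 - ρ ^ 2))) *
    ((1 / (1 - Real.sqrt (1 - ρ ^ 2))) ^ ((3 : ℝ) / 2 + l) -
      (1 / (1 + Real.sqrt (1 - ρ ^ 2))) ^ ((3 : ℝ) / 2 + l))

set_option maxHeartbeats 2000000 in
/-- eq. (wronski): the Wronskian of `ψ_{0,l}` and `ψ_{1,l}` equals
`−2^{l+3/2}/(ρ²(1−ρ²)^{3/2})` on `(0,1)`. -/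
theorem stmt_11 (l : ℕ) :
    ∀ ρ ∈ Set.Ioo (0 : ℝ) 1,
      psi0 l ρ * deriv (psi1 l) ρ - deriv (psi0 l) ρ * psi1 l ρ =
        -(2 : ℝ) ^ ((l : ℝ) + 3 / 2) / (ρ ^ 2 * (1 - ρ ^ 2) ^ ((3 : ℝ) / 2)) := by
  intro ρ hρ
  obtain ⟨hρ0, hρ1⟩ := hρ
  set c : ℝ := (3 : ℝ) / 2 + l with hc
  have h1ρ : (0 : ℝ) < 1 - ρ ^ 2 := by nlinarith
  set s := Real.sqrt (1 - ρ ^ 2) with hsdef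
  have hs0 : 0 < s := Real.sqrt_pos.mpr h1ρ
  have hs2 : s ^ 2 = 1 - ρ ^ 2 := Real.sq_sqrt h1ρ.le
  have hs1 : s < 1 := by nlinarith [hs2]
  have h1s : (0 : ℝ) < 1 + s := by linarith
  have h1s' : (0 : ℝ) < 1 - s := by linarith
  -- rpow of (1 - ρ^2) in terms of s
  have hq : ∀ q : ℝ, (1 - ρ ^ 2) ^ (q : ℝ) = s ^ (2 * q) := by
    intro q
    rw [← hs2, ← Real.rpow_natCast s 2, ← Real.rpow_mul hs0.le]
    norm_num
  have e1 : (1 - ρ ^ 2) ^ (-(1 / 2) : ℝ) = s⁻¹ := by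
    rw [hq, show (2 : ℝ) * -(1 / 2) = -1 by norm_num, Real.rpow_neg_one]
  have e2 : (1 - ρ ^ 2) ^ (-(1 / 2) - 1 : ℝ) = (s ^ 3)⁻¹ := by
    rw [hq, show (2 : ℝ) * (-(1 / 2) - 1) = -((3 : ℕ) : ℝ) by norm_num,
      Real.rpow_neg hs0.le, Real.rpow_natCast]
  have e3 : (1 - ρ ^ 2) ^ ((3 : ℝ) / 2) = s ^ 3 := by
    rw [hq, show (2 : ℝ) * ((3 : ℝ) / 2) = ((3 : ℕ) : ℝ) by norm_num, Real.rpow_natCast]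
  -- derivative of sqrt(1 - x^2)
  have hInner : HasDerivAt (fun x : ℝ => 1 - x ^ 2) (-(2 * ρ)) ρ := by
    simpa using (hasDerivAt_pow 2 ρ).const_sub 1
  have hS : HasDerivAt (fun x : ℝ => Real.sqrt (1 - x ^ 2)) (-(ρ / s)) ρ := by
    have := hInner.sqrt h1ρ.ne'
    convert this using 1
    rw [← hsdef]
    field_simp
  -- atoms
  set A : ℝ := (2 / (1 + s)) ^ c with hA
  set P : ℝ := (1 / (1 - s)) ^ c with hP
  set Q : ℝ := (1 / (1 + s)) ^ c with hQ
  have hQpos : 0 < Q := Real.rpow_pos_of_pos (by positivity) c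
  -- derivative of x ^ (l+1)
  have hpow : HasDerivAt (fun x : ℝ => x ^ (l + 1)) (((l : ℝ) + 1) * ρ ^ l) ρ := by
    simpa using hasDerivAt_pow (l + 1) ρ
  -- derivative of (1-x^2)^(-1/2)
  have hE : HasDerivAt (fun x : ℝ => (1 - x ^ 2) ^ (-(1 / 2) : ℝ)) (ρ * (s ^ 3)⁻¹) ρ := by
    have := hInner.rpow_const (p := (-(1 / 2) : ℝ)) (Or.inl h1ρ.ne')
    convert this using 1
    rw [e2]; ring
  -- derivative of (2/(1+sqrt(1-x^2)))^c
  have hAd : HasDerivAt (fun x : ℝ => (2 / (1 + Real.sqrt (1 - x ^ 2))) ^ c)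
      (c * A * (ρ / (s * (1 + s)))) ρ := by
    have hb : HasDerivAt (fun x : ℝ => 2 / (1 + Real.sqrt (1 - x ^ 2)))
        ((0 * (1 + s) - 2 * (-(ρ / s))) / (1 + s) ^ 2) ρ :=
      (hasDerivAt_const ρ (2 : ℝ)).div (hS.const_add 1) h1s.ne'
    have := hb.rpow_const (p := c) (Or.inl (by positivity))
    convert this using 1
    rw [← hsdef, Real.rpow_sub_one (by positivity), ← hA]
    field_simp
    ring
  -- derivative of (1/(1-sqrt(1-x^2)))^c
  have hPd : HasDerivAt (fun x : ℝ => (1 / (1 - Real.sqrt (1 - x ^ 2))) ^ c)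
      (-(c * P * (ρ / (s * (1 - s))))) ρ := by
    have hb : HasDerivAt (fun x : ℝ => 1 / (1 - Real.sqrt (1 - x ^ 2)))
        ((0 * (1 - s) - 1 * (0 - -(ρ / s))) / (1 - s) ^ 2) ρ :=
      (hasDerivAt_const ρ (1 : ℝ)).div ((hasDerivAt_const ρ (1 : ℝ)).sub hS) h1s'.ne'
    have := hb.rpow_const (p := c) (Or.inl (by positivity))
    convert this using 1
    rw [← hsdef, Real.rpow_sub_one (by positivity), ← hP]
    field_simp
    ring
  -- derivative of (1/(1+sqrt(1-x^2)))^c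
  have hQd : HasDerivAt (fun x : ℝ => (1 / (1 + Real.sqrt (1 - x ^ 2))) ^ c)
      (c * Q * (ρ / (s * (1 + s)))) ρ := by
    have hb : HasDerivAt (fun x : ℝ => 1 / (1 + Real.sqrt (1 - x ^ 2)))
        ((0 * (1 + s) - 1 * (-(ρ / s))) / (1 + s) ^ 2) ρ :=
      (hasDerivAt_const ρ (1 : ℝ)).div (hS.const_add 1) h1s.ne'
    have := hb.rpow_const (p := c) (Or.inl (by positivity))
    convert this using 1
    rw [← hsdef, Real.rpow_sub_one (by positivity), ← hQ]
    field_simp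
    ring
  -- derivative of 1/((3+2l) * sqrt(1-x^2))
  have hk : (0 : ℝ) < 3 + 2 * l := by positivity
  have hMd : HasDerivAt (fun x : ℝ => 1 / ((3 + 2 * (l : ℝ)) * Real.sqrt (1 - x ^ 2)))
      (ρ / ((3 + 2 * (l : ℝ)) * s ^ 3)) ρ := by
    have hb : HasDerivAt (fun x : ℝ => (3 + 2 * (l : ℝ)) * Real.sqrt (1 - x ^ 2))
        ((3 + 2 * (l : ℝ)) * -(ρ / s)) ρ := hS.const_mul _
    have := (hasDerivAt_const ρ (1 : ℝ)).div hb (by positivity)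
    refine this.congr_deriv ?_
    rw [← hsdef]
    field_simp
    ring
  -- derivative of psi0
  have hpsi0 : HasDerivAt (psi0 l)
      (((l : ℝ) + 1) * ρ ^ l * s⁻¹ * A + ρ ^ (l + 1) * (ρ * (s ^ 3)⁻¹) * A
        + ρ ^ (l + 1) * s⁻¹ * (c * A * (ρ / (s * (1 + s))))) ρ := by
    have h0 : psi0 l = fun x : ℝ => x ^ (l + 1) * (1 - x ^ 2) ^ (-(1 / 2) : ℝ) *
        (2 / (1 + Real.sqrt (1 - x ^ 2))) ^ c := by
      funext x; simp [psi0, hc]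
    rw [h0]
    have := ((hpow.mul hE).mul hAd)
    refine this.congr_deriv ?_
    simp only [Pi.mul_apply]
    rw [← hsdef, e1]
    ring
  -- derivative of psi1
  have hpsi1 : HasDerivAt (psi1 l)
      (((l : ℝ) + 1) * ρ ^ l * (1 / ((3 + 2 * (l : ℝ)) * s)) * (P - Q)
        + ρ ^ (l + 1) * (ρ / ((3 + 2 * (l : ℝ)) * s ^ 3)) * (P - Q)
        + ρ ^ (l + 1) * (1 / ((3 + 2 * (l : ℝ)) * s)) *
            (-(c * P * (ρ / (s * (1 - s)))) - c * Q * (ρ / (s * (1 + s))))) ρ := by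
    have h0 : psi1 l = fun x : ℝ => x ^ (l + 1) *
        (1 / ((3 + 2 * (l : ℝ)) * Real.sqrt (1 - x ^ 2))) *
        ((1 / (1 - Real.sqrt (1 - x ^ 2))) ^ c - (1 / (1 + Real.sqrt (1 - x ^ 2))) ^ c) := by
      funext x; simp [psi1, hc]
    rw [h0]
    have := (hpow.mul hMd).mul (hPd.sub hQd)
    refine this.congr_deriv ?_
    simp only [Pi.mul_apply, Pi.sub_apply]
    rw [← hsdef]
    ring
  -- key product relations
  have hA2 : A = 2 ^ c * Q := by
    rw [hA, hQ, show (2 : ℝ) / (1 + s) = 2 * (1 / (1 + s)) by ring,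
      Real.mul_rpow (by norm_num) (by positivity)]
  have hPQ : P = (ρ ^ (2 * l + 3) * Q)⁻¹ := by
    have h1 : P * Q = ((1 / (1 - s)) * (1 / (1 + s))) ^ c := by
      rw [hP, hQ, Real.mul_rpow (by positivity) (by positivity)]
    have h2 : (1 / (1 - s)) * (1 / (1 + s)) = (ρ ^ 2)⁻¹ := by
      have : (1 - s) * (1 + s) = ρ ^ 2 := by nlinarith [hs2]
      field_simp
      linarith [this]
    have h3 : ((ρ ^ 2)⁻¹ : ℝ) ^ c = (ρ ^ (2 * l + 3))⁻¹ := by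
      rw [Real.inv_rpow (by positivity), ← Real.rpow_natCast ρ 2,
        ← Real.rpow_mul hρ0.le, show ((2 : ℕ) : ℝ) * c = ((2 * l + 3 : ℕ) : ℝ) by
          push_cast [hc]; ring, Real.rpow_natCast]
    have h4 : P * Q = (ρ ^ (2 * l + 3))⁻¹ := by rw [h1, h2, h3]
    field_simp at h4 ⊢
    linarith [h4]
  -- finish
  rw [hpsi0.deriv, hpsi1.deriv]
  have hval0 : psi0 l ρ = ρ ^ (l + 1) * s⁻¹ * A := by
    rw [psi0, ← hsdef, ← hc, e1, ← hA]
  have hval1 : psi1 l ρ = ρ ^ (l + 1) * (1 / ((3 + 2 * (l : ℝ)) * s)) * (P - Q) := by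
    rw [psi1, ← hsdef, ← hc, ← hP, ← hQ]
  rw [hval0, hval1, show ((l : ℝ) + 3 / 2) = c by rw [hc]; ring, e3, hA2, hPQ]
  have h2c : (0 : ℝ) < 2 ^ c := Real.rpow_pos_of_pos (by norm_num) c
  have hρl : ρ ^ l ≠ 0 := by positivity
  have hexp : ρ ^ (2 * l + 3) = (ρ ^ l) ^ 2 * ρ ^ 3 := by ring
  rw [hexp]
  rw [hc]
  field_simp
  linear_combination (-2 * s * (3 + 2 * (l : ℝ)) * (ρ ^ l) ^ 2 * ρ) * hs2

end
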